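/- Let α > −1 and n ∈ ℕ with α + 1 ≥ n, and suppose L_n^{(α+3)} and L_n^{(α)} have no common zeros. Let 0 < x_1 < ⋯ < x_n be the zeros of L_n^{(α)} and 0 < w_1 < ⋯ < w_n be the zeros of L_n^{(α+3)}. Then the zeros interlace: x_1 < w_1 < x_2 < w_2 < ⋯ < x_n < w_n. -/

import Mathlib

open Polynomial

/-- The generalized Laguerre polynomial `L_n^{(α)}(x) =
∑_{k=0}^{n} (−1)^k [∏_{j=k+1}^{n}(α+j)] / ((n−k)!·k!) · x^k`. -/
noncomputable def laguerre (α : ℝ) (n : ℕ) : Polynomial ℝ :=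
  ∑ k ∈ Finset.range (n + 1),
    Polynomial.C ((-1 : ℝ) ^ k * (∏ j ∈ Finset.Icc (k + 1) n, (α + (j : ℝ))) /
      ((n - k).factorial * k.factorial)) * Polynomial.X ^ k

lemma prod_shift (α : ℝ) (a b : ℕ) :
    ∏ j ∈ Finset.Icc a b, (α + 1 + (j:ℝ)) = ∏ j ∈ Finset.Icc (a+1) (b+1), (α + (j:ℝ)) := by
  rw [← Finset.map_add_right_Icc a b 1, Finset.prod_map]
  refine Finset.prod_congr rfl fun j hj => ?_
  simp [addRightEmbedding]
  push_cast; ring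

lemma prod_bot (f : ℕ → ℝ) (a b : ℕ) (h : a ≤ b) :
    ∏ j ∈ Finset.Icc a b, f j = f a * ∏ j ∈ Finset.Icc (a+1) b, f j := by
  rw [Finset.Icc_add_one_left_eq_Ioc, ← Finset.Ioc_insert_left h, Finset.prod_insert (by simp)]

lemma laguerre_coeff (α : ℝ) (n m : ℕ) :
    (laguerre α n).coeff m = if m ≤ n then
      (-1 : ℝ) ^ m * (∏ j ∈ Finset.Icc (m + 1) n, (α + (j : ℝ))) /
      ((n - m).factorial * m.factorial) else 0 := by
  rw [laguerre, Polynomial.finset_sum_coeff]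
  simp only [Polynomial.coeff_C_mul, Polynomial.coeff_X_pow, mul_ite, mul_one, mul_zero]
  simp only [eq_comm (a := m)]
  rw [Finset.sum_ite_eq' (Finset.range (n+1)) m]
  simp [Nat.lt_succ_iff]

lemma laguerre_succ (α : ℝ) (n : ℕ) :
    laguerre (α + 1) n = laguerre α n - derivative (laguerre α n) := by
  ext m
  rw [Polynomial.coeff_sub, Polynomial.coeff_derivative, laguerre_coeff, laguerre_coeff,
    laguerre_coeff]
  rcases lt_trichotomy m n with hm | rfl | hm
  · rw [if_pos hm.le, if_pos hm.le, if_pos (by omega)]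
    rw [prod_shift, Finset.prod_Icc_succ_top (by omega),
      prod_bot (fun j => α + (j:ℝ)) (m+1) n (by omega)]
    have h1 : n - m = (n - m - 1) + 1 := by omega
    rw [h1, Nat.factorial_succ]
    have h2 : ((n - m - 1).factorial : ℝ) ≠ 0 := by positivity
    have h3 : ((m.factorial) : ℝ) ≠ 0 := by positivity
    have h4 : ((n - m - 1 : ℕ) : ℝ) + 1 ≠ 0 := by positivity
    have h5 : ((n - m - 1 : ℕ) : ℝ) = (n:ℝ) - (m:ℝ) - 1 := by
      have e : (n - m - 1 : ℕ) = n - (m+1) := by omega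
      rw [e, Nat.cast_sub (by omega)]; push_cast; ring
    have e1 : n - (m + 1) = n - m - 1 := by omega
    rw [e1, Nat.factorial_succ m]
    field_simp
    push_cast [h5]
    ring
  · rw [if_pos le_rfl, if_pos le_rfl, if_neg (by omega)]
    simp
  · rw [if_neg (by omega), if_neg (by omega), if_neg (by omega)]
    simp

lemma laguerre_ode (α : ℝ) (n : ℕ) :
    derivative (derivative (laguerre α n)) * X =
      derivative (laguerre α n) * X - C (α+1) * derivative (laguerre α n)
        - C (n:ℝ) * laguerre α n := by
  ext m
  rcases m with _ | k
  · simp only [Polynomial.mul_coeff_zero, Polynomial.coeff_X_zero, mul_zero,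
      Polynomial.coeff_sub, Polynomial.coeff_C_mul, Polynomial.coeff_derivative,
      laguerre_coeff, Polynomial.coeff_zero, Polynomial.coeff_C_zero]
    rcases Nat.eq_zero_or_pos n with rfl | hn
    · norm_num
    · rw [if_pos (by omega : 1 ≤ n), if_pos (by omega : 0 ≤ n),
        prod_bot (fun j => α + (j:ℝ)) 1 n hn]
      have h1 : n - 0 = (n - 1) + 1 := by omega
      rw [h1, Nat.factorial_succ]
      have h2 : ((n - 1).factorial : ℝ) ≠ 0 := by positivity
      have h5 : ((n - 1 : ℕ) : ℝ) = (n:ℝ) - 1 := by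
        rw [Nat.cast_sub (by omega)]; push_cast; ring
      field_simp
      push_cast
      rw [Nat.factorial_succ (n-1)]
      push_cast [h5]
      ring
  · simp only [Polynomial.coeff_mul_X, Polynomial.coeff_sub, Polynomial.coeff_C_mul,
      Polynomial.coeff_derivative, laguerre_coeff]
    rcases lt_trichotomy (k + 2) (n + 1) with hm | hm | hm
    · rw [if_pos (by omega : k + 2 ≤ n), if_pos (by omega : k + 1 ≤ n),
        prod_bot (fun j => α + (j:ℝ)) (k+2) n (by omega)]
      have e1 : n - (k + 1) = n - k - 2 + 1 := by omega
      have e2 : n - (k + 2) = n - k - 2 := by omega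
      rw [e1, e2, Nat.factorial_succ (n-k-2), Nat.factorial_succ (k+1)]
      have h2 : ((n - k - 2).factorial : ℝ) ≠ 0 := by positivity
      have h3 : ((k+1).factorial : ℝ) ≠ 0 := by positivity
      have h5 : ((n - k - 2 : ℕ) : ℝ) = (n:ℝ) - k - 2 := by
        have e : (n - k - 2 : ℕ) = n - (k+2) := by omega
        rw [e, Nat.cast_sub (by omega)]; push_cast; ring
      field_simp
      push_cast [h5]
      ring
    · obtain rfl : n = k + 1 := by omega
      rw [if_neg (by omega), if_pos (by omega : k + 1 ≤ k + 1)]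
      push_cast
      ring
    · rw [if_neg (by omega : ¬ (k + 2 ≤ n)), if_neg (by omega : ¬ (k + 1 ≤ n))]
      ring

lemma laguerre_key (α : ℝ) (n : ℕ) :
    X^2 * laguerre (α+3) n =
      (X^2 - Polynomial.C (2*(n:ℝ)) * X - Polynomial.C ((n:ℝ)*(α+2))) * laguerre α n +
      (-X^2 + Polynomial.C ((n:ℝ) - α - 1) * X - Polynomial.C ((α+1)*(α+2))) *
        derivative (laguerre α n) := by
  have h1 := laguerre_succ α n
  have h2 := laguerre_succ (α+1) n
  have h3 := laguerre_succ (α+2) n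
  rw [show α+1+1 = α+2 by ring] at h2
  rw [show α+2+1 = α+3 by ring] at h3
  have E1 := laguerre_ode α n
  have E2 := congrArg derivative E1
  simp only [derivative_mul, derivative_X, derivative_sub, derivative_add, derivative_C,
    derivative_one, derivative_C_mul, mul_one] at E2
  rw [h3, h2, h1]
  simp only [derivative_sub]
  simp only [Polynomial.C_add, Polynomial.C_mul, Polynomial.C_sub, Polynomial.C_1,
    map_ofNat] at E1 E2 ⊢
  linear_combination (2*X + Polynomial.C α + 2) * E1 + (-X) * E2

lemma poly_prod (p : Polynomial ℝ) (n : ℕ) (y : ℕ → ℝ)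
    (hinj : Set.InjOn y (Finset.Icc 1 n))
    (hdeg : p.natDegree ≤ n) (hc : p.coeff n ≠ 0)
    (hroots : ∀ i ∈ Finset.Icc 1 n, p.eval (y i) = 0) :
    p = Polynomial.C (p.coeff n) * ∏ i ∈ Finset.Icc 1 n, (X - Polynomial.C (y i)) := by
  rcases Nat.eq_zero_or_pos n with rfl | hn
  · simp only [show Finset.Icc 1 0 = (∅ : Finset ℕ) from rfl, Finset.prod_empty, mul_one]
    exact Polynomial.eq_C_of_natDegree_le_zero hdeg
  have hmon : ∀ i ∈ Finset.Icc 1 n, (X - Polynomial.C (y i)).Monic :=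
    fun i _ => monic_X_sub_C (y i)
  have hm : (∏ i ∈ Finset.Icc 1 n, (X - Polynomial.C (y i))).Monic :=
    monic_prod_of_monic _ _ hmon
  have hdp : (∏ i ∈ Finset.Icc 1 n, (X - Polynomial.C (y i))).natDegree = n := by
    rw [natDegree_prod_of_monic _ _ hmon]
    simp
  have hcoeffn : (∏ i ∈ Finset.Icc 1 n, (X - Polynomial.C (y i))).coeff n = 1 := by
    have := hm.coeff_natDegree
    rwa [hdp] at this
  set q := p - Polynomial.C (p.coeff n) * ∏ i ∈ Finset.Icc 1 n, (X - Polynomial.C (y i)) with hq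
  have hqc : ∀ m, n ≤ m → q.coeff m = 0 := by
    intro m hm'
    rcases eq_or_lt_of_le hm' with rfl | hlt
    · simp [hq, Polynomial.coeff_sub, Polynomial.coeff_C_mul, hcoeffn]
    · have h1 : p.coeff m = 0 := Polynomial.coeff_eq_zero_of_natDegree_lt (lt_of_le_of_lt hdeg hlt)
      have h2 : ((∏ i ∈ Finset.Icc 1 n, (X - Polynomial.C (y i)))).coeff m = 0 :=
        Polynomial.coeff_eq_zero_of_natDegree_lt (by rw [hdp]; exact hlt)
      simp [hq, h1, Polynomial.coeff_C_mul, h2]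
  have hqz : q = 0 := by
    by_cases h0 : q = 0
    · exact h0
    apply Polynomial.eq_zero_of_natDegree_lt_card_of_eval_eq_zero' q
      ((Finset.Icc 1 n).image y)
    · intro t ht
      obtain ⟨i, hi, rfl⟩ := Finset.mem_image.mp ht
      have hz : Polynomial.eval (y i) (∏ j ∈ Finset.Icc 1 n, (X - Polynomial.C (y j))) = 0 := by
        rw [Polynomial.eval_prod]
        exact Finset.prod_eq_zero hi (by simp)
      simp [hq, hroots i hi, hz]
    · rw [Finset.card_image_of_injOn hinj, Nat.card_Icc, Nat.add_sub_cancel]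
      rcases lt_or_ge q.natDegree n with h | h
      · exact h
      · exact absurd (hqc q.natDegree h) (Polynomial.leadingCoeff_ne_zero.mpr h0)
  have := sub_eq_zero.mp hqz
  exact this

lemma derivative_prod_linear (s : Finset ℕ) (y : ℕ → ℝ) :
    derivative (∏ i ∈ s, (X - Polynomial.C (y i))) =
      ∑ i ∈ s, ∏ j ∈ s.erase i, (X - Polynomial.C (y j)) := by
  classical
  induction s using Finset.induction with
  | empty => simp
  | @insert a s ha ih =>
      rw [Finset.prod_insert ha, derivative_mul, ih, Finset.sum_insert ha,
        Finset.erase_insert ha]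
      have hder : derivative (X - Polynomial.C (y a)) = 1 := by
        simp
      rw [hder, one_mul, Finset.mul_sum]
      congr 1
      refine Finset.sum_congr rfl fun i hi => ?_
      rw [Finset.erase_insert_of_ne (by rintro rfl; exact ha hi),
        Finset.prod_insert (by simp [ha, Finset.mem_erase])]

lemma eval_derivative_prod_at_root (s : Finset ℕ) (y : ℕ → ℝ) (i : ℕ) (hi : i ∈ s)
    (hinj : Set.InjOn y s) :
    Polynomial.eval (y i) (derivative (∏ j ∈ s, (X - Polynomial.C (y j)))) =
      ∏ j ∈ s.erase i, (y i - y j) := by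
  classical
  rw [derivative_prod_linear, Polynomial.eval_finset_sum]
  rw [Finset.sum_eq_single_of_mem i hi]
  · rw [Polynomial.eval_prod]
    simp
  · intro b hb hbi
    rw [Polynomial.eval_prod]
    refine Finset.prod_eq_zero (Finset.mem_erase.mpr ⟨fun h => hbi h.symm, hi⟩) (by simp)

lemma sign_prod (s : Finset ℕ) (f : ℕ → ℝ) (hf : ∀ j ∈ s, f j ≠ 0) :
    0 < (-1:ℝ)^((s.filter (fun j => f j < 0)).card) * ∏ j ∈ s, f j := by
  classical
  rw [← Finset.prod_filter_mul_prod_filter_not s (fun j => f j < 0)]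
  have h1 : ∏ j ∈ s.filter (fun j => f j < 0), f j =
      (-1:ℝ)^((s.filter (fun j => f j < 0)).card) *
        ∏ j ∈ s.filter (fun j => f j < 0), (-(f j)) := by
    rw [← Finset.prod_const, ← Finset.prod_mul_distrib]
    exact Finset.prod_congr rfl fun j _ => by ring
  rw [h1, ← mul_assoc, ← mul_assoc, ← pow_add]
  rw [Even.neg_one_pow ⟨_, rfl⟩, one_mul]
  apply mul_pos
  · apply Finset.prod_pos
    intro j hj
    have := (Finset.mem_filter.mp hj).2
    linarith
  · apply Finset.prod_pos
    intro j hj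
    have h2 := (Finset.mem_filter.mp hj).2
    have h3 := hf j (Finset.mem_filter.mp hj).1
    rcases lt_trichotomy (f j) 0 with h | h | h
    · exact absurd h h2
    · exact absurd h h3
    · exact h

theorem laguerre_interlacing_equal_deg_param_three_of_le
    (α : ℝ) (hα : -1 < α) (n : ℕ) (hn : (n : ℝ) ≤ α + 1)
    (hnc : ∀ t : ℝ, ¬((laguerre (α + 3) n).eval t = 0 ∧ (laguerre α n).eval t = 0))
    (x : ℕ → ℝ)
    (hxpos : ∀ i ∈ Finset.Icc 1 n, 0 < x i)
    (hxmono : ∀ i ∈ Finset.Icc 1 n, ∀ j ∈ Finset.Icc 1 n, i < j → x i < x j)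
    (hxroots : ∀ t : ℝ, (laguerre α n).eval t = 0 ↔ ∃ i ∈ Finset.Icc 1 n, x i = t)
    (w : ℕ → ℝ)
    (hwpos : ∀ i ∈ Finset.Icc 1 n, 0 < w i)
    (hwmono : ∀ i ∈ Finset.Icc 1 n, ∀ j ∈ Finset.Icc 1 n, i < j → w i < w j)
    (hwroots : ∀ t : ℝ, (laguerre (α + 3) n).eval t = 0 ↔ ∃ i ∈ Finset.Icc 1 n, w i = t) :
    ∀ i ∈ Finset.Icc 1 n, x i < w i ∧ (i < n → w i < x (i + 1)) := by
  classical
  set s := Finset.Icc 1 n with hs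
  -- leading coefficient
  have hcoeffn : ∀ β : ℝ, (laguerre β n).coeff n = (-1)^n / n.factorial := by
    intro β
    rw [laguerre_coeff, if_pos le_rfl, Finset.Icc_eq_empty (by omega)]
    simp
  have hcne : ((-1:ℝ)^n / n.factorial) ≠ 0 := by
    apply div_ne_zero
    · exact pow_ne_zero _ (by norm_num)
    · positivity
  have hdeg : ∀ β : ℝ, (laguerre β n).natDegree ≤ n := by
    intro β
    apply Polynomial.natDegree_le_iff_coeff_eq_zero.mpr
    intro m hm
    rw [laguerre_coeff, if_neg (by omega)]
  -- injectivity
  have hinjx : Set.InjOn x s := by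
    intro a ha b hb hab
    rcases lt_trichotomy a b with h | h | h
    · exact absurd hab (ne_of_lt (hxmono a ha b hb h))
    · exact h
    · exact absurd hab.symm (ne_of_lt (hxmono b hb a ha h))
  have hinjw : Set.InjOn w s := by
    intro a ha b hb hab
    rcases lt_trichotomy a b with h | h | h
    · exact absurd hab (ne_of_lt (hwmono a ha b hb h))
    · exact h
    · exact absurd hab.symm (ne_of_lt (hwmono b hb a ha h))
  -- product representations
  set c : ℝ := (-1)^n / n.factorial with hc
  have hLprod : laguerre α n = Polynomial.C c * ∏ i ∈ s, (X - Polynomial.C (x i)) := by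
    have := poly_prod (laguerre α n) n x hinjx (hdeg α) (by rw [hcoeffn]; exact hcne)
      (fun i hi => (hxroots (x i)).mpr ⟨i, hi, rfl⟩)
    rwa [hcoeffn] at this
  have hMprod : laguerre (α+3) n = Polynomial.C c * ∏ i ∈ s, (X - Polynomial.C (w i)) := by
    have := poly_prod (laguerre (α+3) n) n w hinjw (hdeg (α+3))
      (by rw [hcoeffn]; exact hcne)
      (fun i hi => (hwroots (w i)).mpr ⟨i, hi, rfl⟩)
    rwa [hcoeffn] at this
  -- F and G
  set F : ℕ → ℝ := fun i => ∏ j ∈ s, (x i - w j) with hF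
  set G : ℕ → ℝ := fun i => ∏ j ∈ s.erase i, (x i - x j) with hG
  have hGne : ∀ i ∈ s, G i ≠ 0 := by
    intro i hi
    apply Finset.prod_ne_zero_iff.mpr
    intro j hj
    have hji := Finset.mem_erase.mp hj
    exact sub_ne_zero.mpr fun h => hji.1 (hinjx hji.2 hi h.symm)
  -- key evaluated identity
  have hmain : ∀ i ∈ s, (x i)^2 * F i =
      (-(x i)^2 + ((n:ℝ) - α - 1) * (x i) - (α+1)*(α+2)) * G i := by
    intro i hi
    have hev := congrArg (Polynomial.eval (x i)) (laguerre_key α n)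
    have hLx : Polynomial.eval (x i) (laguerre α n) = 0 :=
      (hxroots (x i)).mpr ⟨i, hi, rfl⟩
    have hMx : Polynomial.eval (x i) (laguerre (α+3) n) = c * F i := by
      rw [hMprod]
      simp [Polynomial.eval_prod, hF]
    have hL'x : Polynomial.eval (x i) (derivative (laguerre α n)) = c * G i := by
      rw [hLprod, derivative_C_mul, Polynomial.eval_C_mul,
        eval_derivative_prod_at_root s x i hi hinjx]
    rw [Polynomial.eval_mul, Polynomial.eval_add, Polynomial.eval_mul, Polynomial.eval_mul,
      hLx, hMx, hL'x] at hev
    simp only [Polynomial.eval_add, Polynomial.eval_sub, Polynomial.eval_neg,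
      Polynomial.eval_mul, Polynomial.eval_pow, Polynomial.eval_X, Polynomial.eval_C] at hev
    apply mul_left_cancel₀ hcne
    linear_combination hev
  -- signs
  have hQneg : ∀ i ∈ s, (-(x i)^2 + ((n:ℝ) - α - 1) * (x i) - (α+1)*(α+2)) < 0 := by
    intro i hi
    have h1 := hxpos i hi
    nlinarith [h1, hn, hα]
  have hFG : ∀ i ∈ s, F i * G i < 0 := by
    intro i hi
    have h6 := hmain i hi
    have hGn := hGne i hi
    have hQn := hQneg i hi
    have hx2 : 0 < (x i)^2 := pow_pos (hxpos i hi) 2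
    have hG2 : 0 < (G i)^2 := by positivity
    have h7 : (x i)^2 * (F i * G i) =
        (-(x i)^2 + ((n:ℝ) - α - 1) * (x i) - (α+1)*(α+2)) * (G i)^2 := by
      linear_combination (G i) * h6
    by_contra hcon
    push_neg at hcon
    nlinarith [h7, mul_neg_of_neg_of_pos hQn hG2, mul_nonneg hx2.le hcon]
  have hFne : ∀ i ∈ s, ∀ j ∈ s, x i - w j ≠ 0 := by
    intro i hi j hj
    have hFi : F i ≠ 0 := by
      intro h
      have := hFG i hi
      rw [h] at this
      simp at this
    exact Finset.prod_ne_zero_iff.mp hFi j hj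
  -- A i = number of w's above x i
  set A : ℕ → ℕ := fun i => ((s.filter (fun j => x i - w j < 0)).card) with hA
  have hodd : ∀ i ∈ s, Odd (A i + (n - i)) := by
    intro i hi
    have hsF := sign_prod s (fun j => x i - w j) (hFne i hi)
    have hfilter : ((s.erase i).filter (fun j => x i - x j < 0)) = Finset.Icc (i+1) n := by
      ext j
      simp only [Finset.mem_filter, Finset.mem_erase, hs, Finset.mem_Icc, sub_neg]
      constructor
      · rintro ⟨⟨hji, h1j, hjn⟩, hlt⟩
        refine ⟨?_, hjn⟩
        rcases lt_trichotomy j i with h | h | h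
        · exact absurd (hxmono j (by rw [hs]; exact Finset.mem_Icc.mpr ⟨h1j, hjn⟩) i hi h)
            (by intro hc2; linarith)
        · exact absurd h hji
        · omega
      · rintro ⟨hij, hjn⟩
        have h1i := (Finset.mem_Icc.mp (by rw [hs] at hi; exact hi)).1
        refine ⟨⟨by omega, by omega, hjn⟩, ?_⟩
        exact hxmono i hi j (by rw [hs]; exact Finset.mem_Icc.mpr ⟨by omega, hjn⟩) (by omega)
    have hsG := sign_prod (s.erase i) (fun j => x i - x j) (by
      intro j hj
      have hji := Finset.mem_erase.mp hj
      exact sub_ne_zero.mpr fun h => hji.1 (hinjx hji.2 hi h.symm))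
    rw [hfilter, Nat.card_Icc] at hsG
    have hcard : n + 1 - (i + 1) = n - i := by omega
    rw [hcard] at hsG
    have hprod : ((-1:ℝ)^(A i) * F i) * ((-1:ℝ)^(n-i) * G i) =
        (-1:ℝ)^(A i + (n-i)) * (F i * G i) := by
      rw [pow_add]; ring
    have hpos := mul_pos hsF hsG
    rw [hprod] at hpos
    rcases Nat.even_or_odd (A i + (n - i)) with he | ho
    · rw [he.neg_one_pow, one_mul] at hpos
      exact absurd hpos (not_lt.mpr (le_of_lt (hFG i hi)))
    · exact ho
  -- consecutive decrease
  have hcons : ∀ i, 1 ≤ i → i + 1 ≤ n → A (i+1) + 1 ≤ A i := by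
    intro i h1 h2
    have hi : i ∈ s := by rw [hs]; exact Finset.mem_Icc.mpr ⟨h1, by omega⟩
    have hi1 : i + 1 ∈ s := by rw [hs]; exact Finset.mem_Icc.mpr ⟨by omega, h2⟩
    have hle : A (i+1) ≤ A i := by
      apply Finset.card_le_card
      intro j hj
      obtain ⟨hjs, hlt⟩ := Finset.mem_filter.mp hj
      refine Finset.mem_filter.mpr ⟨hjs, ?_⟩
      have := hxmono i hi (i+1) hi1 (by omega)
      linarith
    obtain ⟨k1, hk1⟩ := hodd i hi
    obtain ⟨k2, hk2⟩ := hodd (i+1) hi1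
    omega
  have hchain : ∀ d i, 1 ≤ i → i + d ≤ n → A (i + d) + d ≤ A i := by
    intro d
    induction d with
    | zero => intro i _ _; simp
    | succ d ih =>
      intro i h1 h2
      have h3 := hcons (i + d) (by omega) (by omega)
      have h4 := ih i h1 (by omega)
      have : i + (d+1) = (i + d) + 1 := by omega
      rw [this]
      omega
  have hA1le : A 1 ≤ n := by
    calc A 1 ≤ s.card := Finset.card_filter_le _ _
    _ = n := by rw [hs, Nat.card_Icc]; omega
  have hAval : ∀ i ∈ s, A i = n - i + 1 := by
    intro i hi
    obtain ⟨h1i, hin⟩ := Finset.mem_Icc.mp (by rw [hs] at hi; exact hi)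
    have hup : A i + (i - 1) ≤ A 1 := by
      have := hchain (i - 1) 1 le_rfl (by omega)
      have e : 1 + (i - 1) = i := by omega
      rwa [e] at this
    have hdown : A n + (n - i) ≤ A i := by
      have := hchain (n - i) i h1i (by omega)
      have e : i + (n - i) = n := by omega
      rwa [e] at this
    have hnodd : 1 ≤ A n := by
      have hnmem : n ∈ s := by rw [hs]; exact Finset.mem_Icc.mpr ⟨by omega, le_rfl⟩
      obtain ⟨k, hk⟩ := hodd n hnmem
      omega
    omega
  -- conclusion
  intro i hi
  obtain ⟨h1i, hin⟩ := Finset.mem_Icc.mp (by rw [hs] at hi; exact hi)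
  have hAi := hAval i hi
  constructor
  · by_contra hcon
    push_neg at hcon
    have hne := hFne i hi i hi
    have hwi : w i < x i := by
      rcases lt_or_eq_of_le hcon with h | h
      · exact h
      · exact absurd (by rw [h]; ring) hne
    have hsub : (s.filter (fun j => x i - w j < 0)) ⊆ Finset.Icc (i+1) n := by
      intro j hj
      obtain ⟨hjs, hlt⟩ := Finset.mem_filter.mp hj
      obtain ⟨h1j, hjn⟩ := Finset.mem_Icc.mp (by rw [hs] at hjs; exact hjs)
      refine Finset.mem_Icc.mpr ⟨?_, hjn⟩
      by_contra hji
      push_neg at hji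
      have : w j ≤ w i := by
        rcases lt_trichotomy j i with h | h | h
        · exact le_of_lt (hwmono j hjs i hi h)
        · rw [h]
        · omega
      linarith
    have hcard := Finset.card_le_card hsub
    have h9 : A i ≤ n + 1 - (i + 1) := by rw [Nat.card_Icc] at hcard; exact hcard
    omega
  · intro hiltn
    have hi1 : i + 1 ∈ s := by rw [hs]; exact Finset.mem_Icc.mpr ⟨by omega, by omega⟩
    have hAi1 := hAval (i+1) hi1
    by_contra hcon
    push_neg at hcon
    have hne := hFne (i+1) hi1 i hi
    have hwi : x (i+1) < w i := by
      rcases lt_or_eq_of_le hcon with h | h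
      · exact h
      · exact absurd (by rw [h]; ring) hne
    have hsub : Finset.Icc i n ⊆ (s.filter (fun j => x (i+1) - w j < 0)) := by
      intro j hj
      obtain ⟨hij, hjn⟩ := Finset.mem_Icc.mp hj
      have hjs : j ∈ s := by rw [hs]; exact Finset.mem_Icc.mpr ⟨by omega, hjn⟩
      refine Finset.mem_filter.mpr ⟨hjs, ?_⟩
      have : w i ≤ w j := by
        rcases lt_or_eq_of_le hij with h | h
        · exact le_of_lt (hwmono i hi j hjs h)
        · rw [h]
      linarith
    have hcard := Finset.card_le_card hsub
    have h9 : n + 1 - i ≤ A (i+1) := by rw [Nat.card_Icc] at hcard; exact hcard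
    omega
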